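/- For g, h ∈ L²(ℝᵈ) and b ∈ GL_d(ℝ), one has ‖g - h‖_{L²(ℝᵈ)} ≥ ‖g_b - h_b‖_{L²([0,1]ᵈ)}, where g_b and h_b are the Grammians of g and h with respect to b. -/

import Mathlib

open MeasureTheory Filter
noncomputable section

open scoped ENNReal NNReal

/-- The Grammian of `g` with respect to the matrix `b`. -/
def gram2 {d : ℕ} (b : Matrix (Fin d) (Fin d) ℝ) (g : (Fin d → ℝ) → ℂ) (ω : Fin d → ℝ) : ℝ :=
  Real.sqrt (|b.det| * ∑' s : Fin d → ℤ, ‖g (b.mulVec (ω + fun i => (s i : ℝ)))‖ ^ 2)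
namespace GramAux
variable {d : ℕ}

def zc (s : Fin d → ℤ) : Fin d → ℝ := fun i => (s i : ℝ)

def box (s : Fin d → ℤ) : Set (Fin d → ℝ) :=
  Set.pi Set.univ fun i => Set.Ico (s i : ℝ) (s i + 1)

lemma mem_box {s : Fin d → ℤ} {x : Fin d → ℝ} : x ∈ box s ↔ ∀ i, ⌊x i⌋ = s i := by
  simp only [box, Set.mem_pi, Set.mem_univ, forall_true_left, Set.mem_Ico]
  refine forall_congr' fun i => ?_
  rw [Int.floor_eq_iff]

lemma measurableSet_box (s : Fin d → ℤ) : MeasurableSet (box s) :=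
  MeasurableSet.univ_pi fun i => measurableSet_Ico

lemma disjoint_box : Pairwise (Function.onFun Disjoint (box (d := d))) := by
  intro s t hst
  rw [Function.onFun, Set.disjoint_left]
  intro x hxs hxt
  exact hst (funext fun i => ((mem_box.1 hxs) i).symm.trans ((mem_box.1 hxt) i))

lemma iUnion_box : (⋃ s : Fin d → ℤ, box s) = Set.univ := by
  ext x
  simp only [Set.mem_iUnion, Set.mem_univ, iff_true]
  exact ⟨fun i => ⌊x i⌋, mem_box.2 fun i => rfl⟩

lemma box_ae_eq_Icc :
    (Set.Icc (0 : Fin d → ℝ) 1 : Set (Fin d → ℝ)) =ᵐ[volume] box (0 : Fin d → ℤ) := by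
  have hsub : box (0 : Fin d → ℤ) ⊆ Set.Icc (0 : Fin d → ℝ) 1 := by
    rw [← Set.pi_univ_Icc]
    refine Set.pi_mono fun i _ => ?_
    simpa [box] using Set.Ico_subset_Icc_self
  have hIcc : volume (Set.Icc (0 : Fin d → ℝ) 1) = 1 := by
    rw [← Set.pi_univ_Icc, volume_pi_pi]
    simp [Real.volume_Icc]
  have hbox : volume (box (0 : Fin d → ℤ)) = 1 := by
    rw [box, volume_pi_pi]
    simp [Real.volume_Ico]
  rw [Filter.eventuallyEq_set]
  have hdiff : volume (Set.Icc (0 : Fin d → ℝ) 1 \ box (0 : Fin d → ℤ)) = 0 := by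
    rw [measure_diff hsub (measurableSet_box _).nullMeasurableSet (by simp [hbox]), hIcc, hbox,
      tsub_self]
  have := measure_eq_zero_iff_ae_notMem.1 hdiff
  filter_upwards [this] with x hx
  simp only [Set.mem_diff, not_and, not_not] at hx
  constructor
  · intro h; exact hx h
  · intro h; exact hsub h

lemma unfold (φ : (Fin d → ℝ) → ℝ≥0∞) :
    ∑' s : (Fin d → ℤ), ∫⁻ ω in Set.Icc (0 : Fin d → ℝ) 1, φ (ω + zc s) = ∫⁻ x, φ x := by
  have h1 : ∀ s : Fin d → ℤ,
      ∫⁻ ω in Set.Icc (0 : Fin d → ℝ) 1, φ (ω + zc s) = ∫⁻ x in box s, φ x := by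
    intro s
    rw [setLIntegral_congr box_ae_eq_Icc]
    have hmp : MeasurePreserving (· + zc s) (volume : Measure (Fin d → ℝ)) volume :=
      measurePreserving_add_right _ _
    have hemb : MeasurableEmbedding (· + zc s) :=
      (Homeomorph.addRight (zc s)).measurableEmbedding
    have hpre : (· + zc s) ⁻¹' box s = box (0 : Fin d → ℤ) := by
      ext x
      simp only [Set.mem_preimage, box, Set.mem_pi, Set.mem_univ, forall_true_left, Set.mem_Ico,
        Pi.add_apply]
      refine forall_congr' fun i => ?_
      simp only [zc, Pi.zero_apply, Int.cast_zero, zero_add]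
      constructor
      · rintro ⟨h1, h2⟩; constructor <;> linarith
      · rintro ⟨h1, h2⟩; constructor <;> linarith
    rw [← hpre, hmp.setLIntegral_comp_preimage_emb hemb]
  simp_rw [h1]
  rw [← lintegral_iUnion measurableSet_box disjoint_box, iUnion_box, Measure.restrict_univ]

end GramAux

namespace GramAux2
open GramAux
variable {d : ℕ}

lemma map_mulVec {b : Matrix (Fin d) (Fin d) ℝ} (hdet : b.det ≠ 0) :
    Measure.map (fun x => b.mulVec x) (volume : Measure (Fin d → ℝ)) =
      ENNReal.ofReal |b.det|⁻¹ • volume := by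
  have : (fun x => b.mulVec x) = ⇑(Matrix.toLin' b) := by
    funext x; rw [Matrix.toLin'_apply]
  rw [this, Real.map_matrix_volume_pi_eq_smul_volume_pi hdet, abs_inv]

lemma measurable_mulVec (b : Matrix (Fin d) (Fin d) ℝ) :
    Measurable fun x : Fin d → ℝ => b.mulVec x := by
  have : (fun x => b.mulVec x) = ⇑(Matrix.toLin' b) := by
    funext x; rw [Matrix.toLin'_apply]
  rw [this]
  exact (Matrix.toLin' b).continuous_of_finiteDimensional.measurable

lemma qmp_mulVec {b : Matrix (Fin d) (Fin d) ℝ} (hdet : b.det ≠ 0) :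
    Measure.QuasiMeasurePreserving (fun x : Fin d → ℝ => b.mulVec x) volume volume := by
  refine ⟨measurable_mulVec b, ?_⟩
  rw [map_mulVec hdet]
  exact Measure.smul_absolutelyContinuous

lemma measurable_sq_nnnorm : Measurable fun z : ℂ => (‖z‖₊ : ℝ≥0∞) ^ (2 : ℝ) :=
  (ENNReal.continuous_rpow_const.measurable).comp measurable_nnnorm.coe_nnreal_ennreal

lemma master {u : (Fin d → ℝ) → ℂ} (hu : AEMeasurable u (volume : Measure (Fin d → ℝ)))
    {b : Matrix (Fin d) (Fin d) ℝ} (hdet : b.det ≠ 0) :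
    ∫⁻ ω in Set.Icc (0 : Fin d → ℝ) 1,
        ∑' s : (Fin d → ℤ), (‖u (b.mulVec (ω + zc s))‖₊ : ℝ≥0∞) ^ (2 : ℝ)
      = ENNReal.ofReal |b.det|⁻¹ * ∫⁻ x, (‖u x‖₊ : ℝ≥0∞) ^ (2 : ℝ) := by
  have hmeasψ : ∀ s : Fin d → ℤ,
      AEMeasurable (fun ω : Fin d → ℝ => (‖u (b.mulVec (ω + zc s))‖₊ : ℝ≥0∞) ^ (2 : ℝ))
        (volume.restrict (Set.Icc (0 : Fin d → ℝ) 1)) := by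
    intro s
    have hqmp : Measure.QuasiMeasurePreserving
        (fun ω : Fin d → ℝ => b.mulVec (ω + zc s)) volume volume :=
      (qmp_mulVec hdet).comp (measurePreserving_add_right volume (zc s)).quasiMeasurePreserving
    exact (measurable_sq_nnnorm.comp_aemeasurable
      (hu.comp_quasiMeasurePreserving hqmp)).restrict
  rw [lintegral_tsum hmeasψ, unfold fun x => (‖u (b.mulVec x)‖₊ : ℝ≥0∞) ^ (2 : ℝ)]
  have hg' : AEMeasurable (fun y => (‖u y‖₊ : ℝ≥0∞) ^ (2 : ℝ))
      (Measure.map (fun x => b.mulVec x) (volume : Measure (Fin d → ℝ))) := by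
    rw [map_mulVec hdet]
    exact (measurable_sq_nnnorm.comp_aemeasurable hu).mono_ac Measure.smul_absolutelyContinuous
  rw [← lintegral_map' hg' (measurable_mulVec b).aemeasurable, map_mulVec hdet,
    lintegral_smul_measure, smul_eq_mul]

end GramAux2

namespace GramAux3
open GramAux GramAux2
variable {d : ℕ}

lemma sqnn {E : Type*} [SeminormedAddGroup E] (z : E) : (‖z‖₊ : ℝ≥0∞) ^ (2 : ℝ) = ENNReal.ofReal (‖z‖ ^ 2) := by
  rw [← enorm_eq_nnnorm, ← ofReal_norm,
    ENNReal.ofReal_rpow_of_nonneg (norm_nonneg _) (by norm_num : (0:ℝ) ≤ 2), Real.rpow_two]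

lemma lintegral_sq_lt_top {u : (Fin d → ℝ) → ℂ} (hu : MemLp u 2 (volume : Measure (Fin d → ℝ))) :
    ∫⁻ x, (‖u x‖₊ : ℝ≥0∞) ^ (2 : ℝ) < ∞ := by
  have h := hu.2
  rw [eLpNorm_eq_lintegral_rpow_enorm_toReal (by norm_num) (by norm_num)] at h
  simp only [ENNReal.toReal_ofNat, enorm_eq_nnnorm] at h
  rw [← ENNReal.rpow_lt_top_iff_of_pos (y := (1/2 : ℝ)) (by norm_num)]
  exact h

lemma summable_ae {u : (Fin d → ℝ) → ℂ} (hu : MemLp u 2 (volume : Measure (Fin d → ℝ)))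
    {b : Matrix (Fin d) (Fin d) ℝ} (hdet : b.det ≠ 0) :
    ∀ᵐ ω ∂(volume.restrict (Set.Icc (0 : Fin d → ℝ) 1)),
      Summable fun s : (Fin d → ℤ) => ‖u (b.mulVec (ω + zc s))‖ ^ 2 := by
  set G := fun ω : Fin d → ℝ =>
    ∑' s : (Fin d → ℤ), (‖u (b.mulVec (ω + zc s))‖₊ : ℝ≥0∞) ^ (2 : ℝ) with hG
  have hmeasψ : ∀ s : Fin d → ℤ,
      AEMeasurable (fun ω : Fin d → ℝ => (‖u (b.mulVec (ω + zc s))‖₊ : ℝ≥0∞) ^ (2 : ℝ))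
        (volume.restrict (Set.Icc (0 : Fin d → ℝ) 1)) := by
    intro s
    have hqmp : Measure.QuasiMeasurePreserving
        (fun ω : Fin d → ℝ => b.mulVec (ω + zc s)) volume volume :=
      (qmp_mulVec hdet).comp (measurePreserving_add_right volume (zc s)).quasiMeasurePreserving
    exact (measurable_sq_nnnorm.comp_aemeasurable
      ((hu.aestronglyMeasurable.aemeasurable).comp_quasiMeasurePreserving hqmp)).restrict
  have hGmeas : AEMeasurable G (volume.restrict (Set.Icc (0 : Fin d → ℝ) 1)) := by
    exact AEMeasurable.ennreal_tsum hmeasψ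
  have hfin : ∫⁻ ω in Set.Icc (0 : Fin d → ℝ) 1, G ω ≠ ∞ := by
    rw [hG, master hu.aestronglyMeasurable.aemeasurable hdet]
    exact (ENNReal.mul_lt_top ENNReal.ofReal_lt_top (lintegral_sq_lt_top hu)).ne
  filter_upwards [ae_lt_top' hGmeas hfin] with ω hω
  have hsum : Summable fun s : (Fin d → ℤ) =>
      ((‖u (b.mulVec (ω + zc s))‖₊ : ℝ≥0∞) ^ (2 : ℝ)).toReal :=
    ENNReal.summable_toReal hω.ne
  refine hsum.congr fun s => ?_
  rw [sqnn, ENNReal.toReal_ofReal (by positivity)]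

end GramAux3

namespace GramAux4
open GramAux GramAux2 GramAux3

lemma l2_rev {ι : Type*} (a c : ι → ℂ) (ha : Summable fun i => ‖a i‖ ^ 2)
    (hc : Summable fun i => ‖c i‖ ^ 2) :
    |Real.sqrt (∑' i, ‖a i‖ ^ 2) - Real.sqrt (∑' i, ‖c i‖ ^ 2)| ≤
      Real.sqrt (∑' i, ‖a i - c i‖ ^ 2) := by
  have hp : (0 : ℝ) < (2 : ℝ≥0∞).toReal := by norm_num
  have conv : ∀ r : ℝ, r ^ ((2 : ℝ≥0∞)).toReal = r ^ 2 := fun r => by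
    norm_num [Real.rpow_two]
  have hax : Memℓp a 2 := memℓp_gen (ha.congr fun i => (conv _).symm)
  have hcx : Memℓp c 2 := memℓp_gen (hc.congr fun i => (conv _).symm)
  set x : lp (fun _ : ι => ℂ) 2 := ⟨a, hax⟩ with hx
  set y : lp (fun _ : ι => ℂ) 2 := ⟨c, hcx⟩ with hy
  have norm_eq : ∀ z : lp (fun _ : ι => ℂ) 2,
      ‖z‖ = Real.sqrt (∑' i, ‖z i‖ ^ 2) := by
    intro z
    rw [lp.norm_eq_tsum_rpow hp, Real.sqrt_eq_rpow]
    norm_num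
  have hna : Real.sqrt (∑' i, ‖a i‖ ^ 2) = ‖x‖ := by rw [norm_eq x]
  have hnc : Real.sqrt (∑' i, ‖c i‖ ^ 2) = ‖y‖ := by rw [norm_eq y]
  have hnxy : Real.sqrt (∑' i, ‖a i - c i‖ ^ 2) = ‖x - y‖ := by
    rw [norm_eq (x - y)]
    congr 1
  rw [hna, hnc, hnxy]
  exact abs_norm_sub_norm_le x y

variable {d : ℕ}

lemma gram2_nonneg (b : Matrix (Fin d) (Fin d) ℝ) (g : (Fin d → ℝ) → ℂ) (ω : Fin d → ℝ) :
    0 ≤ gram2 b g ω := Real.sqrt_nonneg _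

lemma gram2_abs_sub_le {g h : (Fin d → ℝ) → ℂ} {b : Matrix (Fin d) (Fin d) ℝ} {ω : Fin d → ℝ}
    (hsg : Summable fun s : (Fin d → ℤ) => ‖g (b.mulVec (ω + zc s))‖ ^ 2)
    (hsh : Summable fun s : (Fin d → ℤ) => ‖h (b.mulVec (ω + zc s))‖ ^ 2) :
    |gram2 b g ω - gram2 b h ω| ≤ gram2 b (fun x => g x - h x) ω := by
  show |Real.sqrt _ - Real.sqrt _| ≤ Real.sqrt _
  rw [Real.sqrt_mul (abs_nonneg _), Real.sqrt_mul (abs_nonneg _), Real.sqrt_mul (abs_nonneg _),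
    ← mul_sub, abs_mul, abs_of_nonneg (Real.sqrt_nonneg |b.det|)]
  refine mul_le_mul_of_nonneg_left ?_ (Real.sqrt_nonneg _)
  exact l2_rev _ _ hsg hsh

end GramAux4

open GramAux GramAux2 GramAux3 GramAux4 in
/-- `‖g - h‖_{L²(ℝᵈ)} ≥ ‖g_b - h_b‖_{L²([0,1]ᵈ)}`. -/
theorem gram_contraction {d : ℕ} (g h : (Fin d → ℝ) → ℂ)
    (hg : MemLp g 2 (volume : Measure (Fin d → ℝ)))
    (hh : MemLp h 2 (volume : Measure (Fin d → ℝ)))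
    (b : Matrix (Fin d) (Fin d) ℝ) (hb : IsUnit b) :
    eLpNorm (fun ω => gram2 b g ω - gram2 b h ω) 2
        (volume.restrict (Set.Icc (0 : Fin d → ℝ) 1)) ≤
      eLpNorm (fun x => g x - h x) 2 (volume : Measure (Fin d → ℝ)) := by
  have hdet : b.det ≠ 0 :=
    isUnit_iff_ne_zero.1 ((Matrix.isUnit_iff_isUnit_det b).1 hb)
  set f : (Fin d → ℝ) → ℂ := fun x => g x - h x with hfdef
  have hf : MemLp f 2 (volume : Measure (Fin d → ℝ)) := hg.sub hh
  have step1 : eLpNorm (fun ω => gram2 b g ω - gram2 b h ω) 2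
      (volume.restrict (Set.Icc (0 : Fin d → ℝ) 1)) ≤
      eLpNorm (fun ω => gram2 b f ω) 2 (volume.restrict (Set.Icc (0 : Fin d → ℝ) 1)) := by
    apply eLpNorm_mono_ae
    filter_upwards [summable_ae hg hdet, summable_ae hh hdet] with ω h1 h2
    rw [Real.norm_eq_abs, Real.norm_eq_abs, abs_of_nonneg (gram2_nonneg b f ω)]
    exact gram2_abs_sub_le h1 h2
  refine step1.trans ?_
  rw [eLpNorm_eq_lintegral_rpow_enorm_toReal (by norm_num) (by norm_num),
    eLpNorm_eq_lintegral_rpow_enorm_toReal (by norm_num) (by norm_num)]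
  simp only [ENNReal.toReal_ofNat, enorm_eq_nnnorm]
  refine ENNReal.rpow_le_rpow ?_ (by norm_num)
  have hpt : ∀ ω : Fin d → ℝ, (‖gram2 b f ω‖₊ : ℝ≥0∞) ^ (2 : ℝ) ≤
      ENNReal.ofReal |b.det| *
        ∑' s : (Fin d → ℤ), (‖f (b.mulVec (ω + zc s))‖₊ : ℝ≥0∞) ^ (2 : ℝ) := by
    intro ω
    have h1 : (‖gram2 b f ω‖₊ : ℝ≥0∞) ^ (2 : ℝ) =
        ENNReal.ofReal (|b.det| * ∑' s : (Fin d → ℤ), ‖f (b.mulVec (ω + zc s))‖ ^ 2) := by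
      rw [sqnn, Real.norm_eq_abs, abs_of_nonneg (gram2_nonneg b f ω)]
      congr 1
      exact Real.sq_sqrt (mul_nonneg (abs_nonneg _)
        (tsum_nonneg fun s => by positivity))
    rw [h1]
    by_cases hsum : Summable fun s : (Fin d → ℤ) => ‖f (b.mulVec (ω + zc s))‖ ^ 2
    · rw [ENNReal.ofReal_mul (abs_nonneg _),
        ENNReal.ofReal_tsum_of_nonneg (fun s => by positivity) hsum]
      refine mul_le_mul_right (le_of_eq (tsum_congr fun s => ?_)) _
      rw [sqnn]
    · rw [tsum_eq_zero_of_not_summable hsum, mul_zero, ENNReal.ofReal_zero]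
      exact zero_le
  calc ∫⁻ ω in Set.Icc (0 : Fin d → ℝ) 1, (‖gram2 b f ω‖₊ : ℝ≥0∞) ^ (2 : ℝ)
      ≤ ∫⁻ ω in Set.Icc (0 : Fin d → ℝ) 1, ENNReal.ofReal |b.det| *
          ∑' s : (Fin d → ℤ), (‖f (b.mulVec (ω + zc s))‖₊ : ℝ≥0∞) ^ (2 : ℝ) :=
        lintegral_mono fun ω => hpt ω
    _ = ENNReal.ofReal |b.det| * ∫⁻ ω in Set.Icc (0 : Fin d → ℝ) 1,
          ∑' s : (Fin d → ℤ), (‖f (b.mulVec (ω + zc s))‖₊ : ℝ≥0∞) ^ (2 : ℝ) :=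
        lintegral_const_mul' _ _ ENNReal.ofReal_ne_top
    _ = ENNReal.ofReal |b.det| *
          (ENNReal.ofReal |b.det|⁻¹ * ∫⁻ x, (‖f x‖₊ : ℝ≥0∞) ^ (2 : ℝ)) := by
        rw [master hf.aestronglyMeasurable.aemeasurable hdet]
    _ = ∫⁻ x, (‖f x‖₊ : ℝ≥0∞) ^ (2 : ℝ) := by
        rw [← mul_assoc, ← ENNReal.ofReal_mul (abs_nonneg _),
          mul_inv_cancel₀ (abs_ne_zero.2 hdet), ENNReal.ofReal_one, one_mul]
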